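/- Let 𝓘 = (I₁,…,I_k) be a geometric chain of ideals in the root poset of Φ with extension 𝓘̲ = (I₁,…,I_k, I̲_{k+1}) where I̲_{k+1} = ⋃_{i+j=k+1}((I_i + I_j) ∩ Φ⁺) ∪ I_k ∪ S. If α ∈ Φ⁺ lies in the nonnegative integer span of supp(𝓘) = I_k ∩ S, then r_α(𝓘̲) = r_α(𝓘). -/

import Mathlib

open scoped Pointwise RealInnerProductSpace

/-- A crystallographic root system together with a choice of simple system. -/
structure RootSystemData (V : Type*) [NormedAddCommGroup V] [InnerProductSpace ℝ V] where
  Φ : Set V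
  S : Set V
  finite : Φ.Finite
  ne_zero : ∀ α ∈ Φ, α ≠ 0
  reflect_mem : ∀ α ∈ Φ, ∀ β ∈ Φ, β - (2 * (inner ℝ β α : ℝ) / (inner ℝ α α : ℝ)) • α ∈ Φ
  crystal : ∀ α ∈ Φ, ∀ β ∈ Φ, ∃ m : ℤ, 2 * (inner ℝ β α : ℝ) / (inner ℝ α α : ℝ) = (m : ℝ)
  reduced : ∀ α ∈ Φ, ∀ t : ℝ, t • α ∈ Φ → t = 1 ∨ t = -1
  S_sub : S ⊆ Φ
  S_indep : LinearIndependent ℝ ((↑) : S → V)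
  decomp : ∀ α ∈ Φ, α ∈ AddSubmonoid.closure S ∨ -α ∈ AddSubmonoid.closure S

namespace RootSystemData

variable {V : Type*} [NormedAddCommGroup V] [InnerProductSpace ℝ V] (D : RootSystemData V)

/-- The positive roots. -/
def pos : Set V := {α ∈ D.Φ | α ∈ AddSubmonoid.closure D.S}

/-- The root poset order: `α ≤ β` iff `β - α` is a nonnegative integer combination
of simple roots. -/
def rle (α β : V) : Prop := β - α ∈ AddSubmonoid.closure D.S

/-- An (order) ideal of the root poset. -/
def IsIdeal (I : Set V) : Prop :=
  I ⊆ D.pos ∧ ∀ α ∈ I, ∀ β ∈ D.pos, D.rle β α → β ∈ I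

/-- The order filters complementary to a chain of ideals, with the conventions
`J 0 = Φ⁺` (as `I 0 = ∅`) and `J i = J k` for `i > k`. -/
def Jf (k : ℕ) (I : ℕ → Set V) (i : ℕ) : Set V := D.pos \ I (min i k)

/-- A geometric chain of `k` ideals in the root poset. -/
structure IsGeomChain (k : ℕ) (I : ℕ → Set V) : Prop where
  zero : I 0 = ∅
  ideal : ∀ i, 1 ≤ i → i ≤ k → D.IsIdeal (I i)
  mono : ∀ i j, i ≤ j → j ≤ k → I i ⊆ I j
  geomI : ∀ i j, i + j ≤ k → (I i + I j) ∩ D.pos ⊆ I (i + j)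
  geomJ : ∀ i j, (D.Jf k I i + D.Jf k I j) ∩ D.pos ⊆ D.Jf k I (i + j)

/-- A chain of ideals is positive if `S ⊆ I k`. -/
def IsPositiveChain (k : ℕ) (I : ℕ → Set V) : Prop := D.S ⊆ I k

/-- The set of values `r₁ + … + r_m` over all expressions `α = α₁ + … + α_m` with
`α_i ∈ I (r i)` and `1 ≤ r i ≤ k`; its least element (when it exists) is `r_α(𝓘)`. -/
def rVals (_D : RootSystemData V) (k : ℕ) (I : ℕ → Set V) (α : V) : Set ℕ :=
  {N | ∃ m : ℕ, ∃ a : Fin m → V, ∃ r : Fin m → ℕ,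
    (∀ i, 1 ≤ r i ∧ r i ≤ k ∧ a i ∈ I (r i)) ∧ (∑ i, a i) = α ∧ (∑ i, r i) = N}

/-- The extension `𝓘̲` of a geometric chain of `k` ideals to a chain of `k+1` ideals,
with `I̲_{k+1} = ⋃_{i+j=k+1} ((I_i + I_j) ∩ Φ⁺) ∪ I_k ∪ S`. -/
def Ibar (k : ℕ) (I : ℕ → Set V) : ℕ → Set V := fun i =>
  if i ≤ k then I i
  else (⋃ (p : ℕ × ℕ) (_ : p.1 + p.2 = k + 1), (I p.1 + I p.2) ∩ D.pos) ∪ I k ∪ D.S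

/-- `α` is a rank `r` indecomposable element of the chain of ideals `I`. -/
def IsIndec (k : ℕ) (I : ℕ → Set V) (r : ℕ) (α : V) : Prop :=
  α ∈ I r ∧ IsLeast (D.rVals k I α) r ∧
  (∀ i j, i + j = r → α ∉ I i + I j) ∧
  (∀ β ∈ D.pos, ∀ t, t ≤ k → IsLeast (D.rVals k I (α + β)) t → β ∈ I (t - r))

/-- The complement of the `k`-Catalan arrangement of `Φ`. -/
def catComp (k : ℕ) : Set V :=
  {x | ∀ α ∈ D.Φ, ∀ r : ℕ, r ≤ k → (inner ℝ x α : ℝ) ≠ (r : ℝ)}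

/-- A region of the `k`-Catalan arrangement: a connected component of the complement. -/
def IsRegion (k : ℕ) (R : Set V) : Prop :=
  ∃ x ∈ D.catComp k, R = connectedComponentIn (D.catComp k) x

/-- A dominant region of the `k`-Catalan arrangement. -/
def IsDomRegion (k : ℕ) (R : Set V) : Prop :=
  D.IsRegion k R ∧ ∀ x ∈ R, ∀ α ∈ D.pos, 0 < (inner ℝ x α : ℝ)

/-- The complement of the affine Coxeter arrangement of `Φ`. -/
def affComp : Set V := {x | ∀ α ∈ D.Φ, ∀ r : ℤ, (inner ℝ x α : ℝ) ≠ (r : ℝ)}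

/-- An alcove: a connected component of the complement of the affine Coxeter arrangement. -/
def IsAlcove (A : Set V) : Prop :=
  ∃ x ∈ D.affComp, A = connectedComponentIn D.affComp x

/-- The hyperplane `H_α^r` supports a facet of `R`. -/
def IsWall (_D : RootSystemData V) (R : Set V) (α : V) (r : ℝ) : Prop :=
  ∃ x, (inner ℝ x α : ℝ) = r ∧ ∃ ε > 0, ∀ y, (inner ℝ y α : ℝ) = r → dist y x < ε → y ∈ closure R

/-- `H_α^r` is a ceiling of the dominant region (or alcove) `R`: a wall not through
the origin with `R` on the same side as the origin. -/
def IsCeiling (R : Set V) (α : V) (r : ℝ) : Prop :=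
  D.IsWall R α r ∧ 0 < r ∧ ∀ x ∈ R, (inner ℝ x α : ℝ) < r

/-- `H_α^r` is a floor of the dominant region (or alcove) `R`: a wall not through
the origin separating `R` from the origin. -/
def IsFloor (R : Set V) (α : V) (r : ℝ) : Prop :=
  D.IsWall R α r ∧ 0 < r ∧ ∀ x ∈ R, r < (inner ℝ x α : ℝ)

/-- The chain of ideals `θ(R)` associated to a dominant region `R`. -/
def theta (R : Set V) : ℕ → Set V := fun i =>
  {α ∈ D.pos | ∀ x ∈ R, (inner ℝ x α : ℝ) < (i : ℝ)}

/-- `B` is the maximal alcove of the (bounded) region corresponding to the positive chain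
of ideals `I`, i.e. the alcove with `r(B,α) = r_α(𝓘)` for all positive roots `α`. -/
def IsMaxAlcoveOf (k : ℕ) (I : ℕ → Set V) (B : Set V) : Prop :=
  D.IsAlcove B ∧ ∀ α ∈ D.pos, ∃ r : ℕ, IsLeast (D.rVals k I α) r ∧
    ∀ x ∈ B, ((r : ℝ) - 1 < (inner ℝ x α : ℝ) ∧ (inner ℝ x α : ℝ) < (r : ℝ))

/-- The root system `Φ` is irreducible. -/
def Irred : Prop :=
  ∀ Φ₁ Φ₂ : Set V, Φ₁ ∪ Φ₂ = D.Φ → (∀ a ∈ Φ₁, ∀ b ∈ Φ₂, (inner ℝ a b : ℝ) = 0) →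
    Φ₁ = ∅ ∨ Φ₂ = ∅

end RootSystemData


section Aux6
variable {V : Type*} [NormedAddCommGroup V] [InnerProductSpace ℝ V]

private def gMeas (k n : ℕ) : ℕ := if n = k + 1 then k + 3 else n

private lemma sum_update_add {M : Type*} [AddCommMonoid M] {m : ℕ} (f : Fin m → M) (i₀ : Fin m)
    (b : M) : (∑ i, Function.update f i₀ b i) + f i₀ = (∑ i, f i) + b := by
  rw [Finset.sum_update_of_mem (Finset.mem_univ i₀),
    ← Finset.add_sum_erase Finset.univ f (Finset.mem_univ i₀), Finset.erase_eq]
  abel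

private lemma map_closure_nonneg (f : V →ₗ[ℝ] ℝ) (T : Set V) (hf : ∀ t ∈ T, 0 ≤ f t) {x : V}
    (hx : x ∈ AddSubmonoid.closure T) : 0 ≤ f x := by
  refine AddSubmonoid.closure_induction (motive := fun x _ => 0 ≤ f x) hf ?_ ?_ hx
  · simp
  · intro x y _ _ hx hy
    rw [map_add]; linarith

private lemma map_closure_zero (f : V →ₗ[ℝ] ℝ) (T : Set V) (hf : ∀ t ∈ T, f t = 0) {x : V}
    (hx : x ∈ AddSubmonoid.closure T) : f x = 0 := by
  refine AddSubmonoid.closure_induction (motive := fun x _ => f x = 0) hf ?_ ?_ hx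
  · simp
  · intro x y _ _ hx hy
    rw [map_add, hx, hy, add_zero]

private lemma exists_dual (S : Set V) (hli : LinearIndependent ℝ (Subtype.val : S → V))
    {s : V} (hs : s ∈ S) :
    ∃ f : V →ₗ[ℝ] ℝ, f s = 1 ∧ ∀ t ∈ S, t ≠ s → f t = 0 := by
  replace hli : LinearIndepOn ℝ id S := hli
  have hsub : S ⊆ hli.extend (Set.subset_univ S) := hli.subset_extend _
  classical
  set b := Module.Basis.extend hli with hb
  set j : hli.extend (Set.subset_univ S) := ⟨s, hsub hs⟩ with hj
  refine ⟨b.coord j, ?_, ?_⟩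
  · have hbs : (b j : V) = s := Module.Basis.extend_apply_self hli _
    rw [show s = (b j : V) from hbs.symm]
    simp [Module.Basis.coord_apply, Module.Basis.repr_self]
  · intro t ht hts
    set j' : hli.extend (Set.subset_univ S) := ⟨t, hsub ht⟩ with hj'
    have hbt : (b j' : V) = t := Module.Basis.extend_apply_self hli _
    rw [show t = (b j' : V) from hbt.symm]
    rw [Module.Basis.coord_apply, Module.Basis.repr_self, Finsupp.single_apply, if_neg]
    intro hEq
    apply hts
    have : (j' : V) = (j : V) := congrArg Subtype.val hEq
    simpa [hj, hj'] using this


private lemma aux_base (D : RootSystemData V) (k : ℕ) (I : ℕ → Set V) (α : V)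
    (m : ℕ) (a : Fin m → V) (r : Fin m → ℕ)
    (hc : ∀ i, 1 ≤ r i ∧ r i ≤ k + 1 ∧ a i ∈ D.Ibar k I (r i))
    (hle : ∀ i, r i ≤ k) (hsum : (∑ i, a i) = α) :
    ∃ N', N' ∈ D.rVals k I α ∧ N' ≤ ∑ i, r i := by
  refine ⟨∑ i, r i, ⟨m, a, r, fun i => ⟨(hc i).1, hle i, ?_⟩, hsum, rfl⟩, le_rfl⟩
  have h3 := (hc i).2.2
  rwa [show D.Ibar k I (r i) = I (r i) from by simp [RootSystemData.Ibar, hle i]] at h3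

private lemma aux_key (D : RootSystemData V) (k : ℕ) (I : ℕ → Set V)
    (h : D.IsGeomChain k I) (hk : 1 ≤ k) (α : V)
    (hsupp : α ∈ AddSubmonoid.closure (I k ∩ D.S)) :
    ∀ M : ℕ, ∀ m : ℕ, ∀ a : Fin m → V, ∀ r : Fin m → ℕ,
      (∀ i, 1 ≤ r i ∧ r i ≤ k + 1 ∧ a i ∈ D.Ibar k I (r i)) →
      (∑ i, a i) = α →
      (∑ i, gMeas k (r i)) ≤ M →
      ∃ N', N' ∈ D.rVals k I α ∧ N' ≤ ∑ i, r i := by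
  intro M
  induction M with
  | zero =>
    intro m a r hc hsum hM
    have hle : ∀ i, r i ≤ k := by
      intro i
      have h1 : 1 ≤ gMeas k (r i) := by
        have := (hc i).1; simp only [gMeas]; split <;> omega
      have h2 : gMeas k (r i) ≤ ∑ j, gMeas k (r j) :=
        Finset.single_le_sum (f := fun j => gMeas k (r j)) (fun j _ => Nat.zero_le _)
          (Finset.mem_univ i)
      omega
    exact aux_base D k I α m a r hc hle hsum
  | succ M ih =>
    intro m a r hc hsum hM
    by_cases hex : ∃ i, r i = k + 1
    swap
    · push_neg at hex
      have hle : ∀ i, r i ≤ k := fun i => by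
        have := (hc i).2.1; have := hex i; omega
      exact aux_base D k I α m a r hc hle hsum
    obtain ⟨i₀, hi₀⟩ := hex
    have hIbarEq : D.Ibar k I (k + 1) =
        (⋃ (p : ℕ × ℕ) (_ : p.1 + p.2 = k + 1), (I p.1 + I p.2) ∩ D.pos) ∪ I k ∪ D.S := by
      simp only [RootSystemData.Ibar]
      rw [if_neg (by omega)]
    have hIbar : a i₀ ∈ (⋃ (p : ℕ × ℕ) (_ : p.1 + p.2 = k + 1), (I p.1 + I p.2) ∩ D.pos)
        ∪ I k ∪ D.S := by
      have h3 := (hc i₀).2.2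
      rwa [hi₀, hIbarEq] at h3
    have hposS : D.pos ⊆ AddSubmonoid.closure D.S := fun x hx => hx.2
    have hIsub : ∀ n, 1 ≤ n → n ≤ k → I n ⊆ D.pos := fun n h1 h2 => (h.ideal n h1 h2).1
    have hclos : ∀ i, a i ∈ AddSubmonoid.closure D.S := by
      intro i
      obtain ⟨h1, h2, h3⟩ := hc i
      by_cases hik : r i ≤ k
      · rw [show D.Ibar k I (r i) = I (r i) from by simp [RootSystemData.Ibar, hik]] at h3
        exact hposS (hIsub _ h1 hik h3)
      · have hri : r i = k + 1 := by omega
        rw [hri, hIbarEq] at h3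
        rcases h3 with (hU | hIk) | hS
        · obtain ⟨⟨p, q⟩, _, hmem⟩ := Set.mem_iUnion₂.mp hU
          exact hposS hmem.2
        · exact hposS (hIsub k hk le_rfl hIk)
        · exact AddSubmonoid.subset_closure hS
    have hcase : a i₀ ∈ I k ∨ ∃ p q : ℕ, ∃ b c : V, p + q = k + 1 ∧ 1 ≤ p ∧ p ≤ k ∧
        1 ≤ q ∧ q ≤ k ∧ b ∈ I p ∧ c ∈ I q ∧ b + c = a i₀ := by
      rcases hIbar with (hU | hIk) | hS
      · obtain ⟨⟨p, q⟩, hpq, hmem⟩ := Set.mem_iUnion₂.mp hU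
        obtain ⟨b, hb, c, hcm, hbc⟩ := Set.mem_add.mp hmem.1
        have hp1 : 1 ≤ p := by
          rcases Nat.eq_zero_or_pos p with h0 | h1
          · rw [h0, h.zero] at hb; exact absurd hb (Set.notMem_empty b)
          · exact h1
        have hq1 : 1 ≤ q := by
          rcases Nat.eq_zero_or_pos q with h0 | h1
          · rw [h0, h.zero] at hcm; exact absurd hcm (Set.notMem_empty c)
          · exact h1
        simp only at hpq
        exact Or.inr ⟨p, q, b, c, hpq, hp1, by omega, hq1, by omega, hb, hcm, hbc⟩
      · exact Or.inl hIk
      · left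
        by_contra hnot
        obtain ⟨f, hf1, hf0⟩ := exists_dual D.S D.S_indep hS
        have hfα : f α = 0 := by
          refine map_closure_zero f _ (fun t ht => ?_) hsupp
          exact hf0 t ht.2 (fun hts => hnot (hts ▸ ht.1))
        have hsum0 : ∑ i, f (a i) = 0 := by
          rw [← map_sum, hsum, hfα]
        have hnn : ∀ i ∈ Finset.univ, (0 : ℝ) ≤ f (a i) := by
          intro i _
          refine map_closure_nonneg f D.S (fun t ht => ?_) (hclos i)
          by_cases hts : t = a i₀
          · rw [hts, hf1]; norm_num
          · rw [hf0 t ht hts]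
        have h0 := (Finset.sum_eq_zero_iff_of_nonneg hnn).mp hsum0 i₀ (Finset.mem_univ i₀)
        rw [hf1] at h0
        norm_num at h0
    rcases hcase with hIk | ⟨p, q, b, c, hpq, hp1, hpk, hq1, hqk, hb, hcm, hbc⟩
    · -- replace rank k+1 by k at i₀
      have hcond : ∀ i, 1 ≤ Function.update r i₀ k i ∧ Function.update r i₀ k i ≤ k + 1 ∧
          a i ∈ D.Ibar k I (Function.update r i₀ k i) := by
        intro i
        by_cases hi : i = i₀
        · subst hi
          refine ⟨by simpa [Function.update_self] using hk,
            by simp only [Function.update_self]; omega, ?_⟩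
          rw [Function.update_self,
            show D.Ibar k I k = I k from by simp [RootSystemData.Ibar]]
          exact hIk
        · simpa [Function.update_of_ne hi] using hc i
      have E1 := sum_update_add r i₀ k
      rw [hi₀] at E1
      have hcomp : (fun i => gMeas k (Function.update r i₀ k i))
          = Function.update (fun i => gMeas k (r i)) i₀ (gMeas k k) := by
        funext i
        by_cases hi : i = i₀
        · subst hi; simp
        · simp [Function.update_of_ne hi]
      have Eg := sum_update_add (fun i => gMeas k (r i)) i₀ (gMeas k k)
      rw [hi₀] at Eg
      have hgk : gMeas k k = k := by simp only [gMeas]; rw [if_neg (by omega)]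
      have hgk1 : gMeas k (k + 1) = k + 3 := by simp [gMeas]
      have hM2 : (∑ i, gMeas k (Function.update r i₀ k i)) ≤ M := by
        rw [show (∑ i, gMeas k (Function.update r i₀ k i))
            = ∑ i, Function.update (fun i => gMeas k (r i)) i₀ (gMeas k k) i from by
          rw [← hcomp]]
        omega
      obtain ⟨N', hN', hle⟩ := ih m a (Function.update r i₀ k) hcond hsum hM2
      exact ⟨N', hN', by omega⟩
    · -- split a i₀ = b + c
      have hcond : ∀ i : Fin (m + 1), 1 ≤ (Fin.cons q (Function.update r i₀ p) : Fin (m + 1) → ℕ) i ∧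
          (Fin.cons q (Function.update r i₀ p) : Fin (m + 1) → ℕ) i ≤ k + 1 ∧
          (Fin.cons c (Function.update a i₀ b) : Fin (m + 1) → V) i ∈
            D.Ibar k I ((Fin.cons q (Function.update r i₀ p) : Fin (m + 1) → ℕ) i) := by
        intro i
        induction i using Fin.cases with
        | zero =>
          simp only [Fin.cons_zero]
          refine ⟨hq1, by omega, ?_⟩
          rw [show D.Ibar k I q = I q from by simp [RootSystemData.Ibar, hqk]]
          exact hcm
        | succ j =>
          simp only [Fin.cons_succ]
          by_cases hj : j = i₀
          · subst hj
            simp only [Function.update_self]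
            refine ⟨hp1, by omega, ?_⟩
            rw [show D.Ibar k I p = I p from by simp [RootSystemData.Ibar, hpk]]
            exact hb
          · simpa [Function.update_of_ne hj] using hc j
      have hsum2 : (∑ i, (Fin.cons c (Function.update a i₀ b) : Fin (m + 1) → V) i) = α := by
        rw [Fin.sum_cons]
        have E := sum_update_add a i₀ b
        have hu : (∑ i, Function.update a i₀ b i) = (∑ i, a i) + b - a i₀ :=
          eq_sub_of_add_eq E
        rw [hu, ← hbc, hsum]
        abel
      have Er := sum_update_add r i₀ p
      rw [hi₀] at Er
      have hrsum : (∑ i, (Fin.cons q (Function.update r i₀ p) : Fin (m + 1) → ℕ) i) = ∑ i, r i := by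
        rw [Fin.sum_cons]; omega
      have hcompg : (fun i : Fin (m + 1) => gMeas k ((Fin.cons q (Function.update r i₀ p) : Fin (m + 1) → ℕ) i))
          = (Fin.cons (gMeas k q) (Function.update (fun i => gMeas k (r i)) i₀ (gMeas k p)) : Fin (m + 1) → ℕ) := by
        funext i
        induction i using Fin.cases with
        | zero => simp
        | succ j =>
          simp only [Fin.cons_succ]
          by_cases hj : j = i₀
          · subst hj; simp
          · simp [Function.update_of_ne hj]
      have Eg := sum_update_add (fun i => gMeas k (r i)) i₀ (gMeas k p)
      rw [hi₀] at Eg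
      have hgp : gMeas k p = p := by simp only [gMeas]; rw [if_neg (by omega)]
      have hgq : gMeas k q = q := by simp only [gMeas]; rw [if_neg (by omega)]
      have hgk1 : gMeas k (k + 1) = k + 3 := by simp [gMeas]
      have hM2 : (∑ i, gMeas k ((Fin.cons q (Function.update r i₀ p) : Fin (m + 1) → ℕ) i)) ≤ M := by
        rw [show (∑ i, gMeas k ((Fin.cons q (Function.update r i₀ p) : Fin (m + 1) → ℕ) i))
            = ∑ i : Fin (m + 1), (Fin.cons (gMeas k q)
                (Function.update (fun i => gMeas k (r i)) i₀ (gMeas k p)) : Fin (m + 1) → ℕ) i from by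
          rw [← hcompg], Fin.sum_cons]
        omega
      obtain ⟨N', hN', hle⟩ := ih (m + 1) _ _ hcond hsum2 hM2
      exact ⟨N', hN', by omega⟩

end Aux6

/-- If `α ∈ Φ⁺` lies in the nonnegative integer span of
`supp(𝓘) = I_k ∩ S`, then `r_α(𝓘̲) = r_α(𝓘)`. -/
theorem statement6 {V : Type*} [NormedAddCommGroup V] [InnerProductSpace ℝ V]
    (D : RootSystemData V) (k : ℕ) (I : ℕ → Set V) (h : D.IsGeomChain k I)
    (α : V) (hα : α ∈ D.pos) (hsupp : α ∈ AddSubmonoid.closure (I k ∩ D.S)) :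
    ∀ r : ℕ, IsLeast (D.rVals (k + 1) (D.Ibar k I) α) r ↔ IsLeast (D.rVals k I α) r := by
  rcases Nat.eq_zero_or_pos k with hk0 | hk
  · subst hk0
    have hα0 : α = 0 := by
      rw [h.zero] at hsupp
      simpa [AddSubmonoid.closure_empty] using hsupp
    exact absurd hα0 (D.ne_zero α hα.1)
  have hsub : D.rVals k I α ⊆ D.rVals (k + 1) (D.Ibar k I) α := by
    rintro N ⟨m, a, rr, hc, hsum, hN⟩
    refine ⟨m, a, rr, fun i => ⟨(hc i).1, by have := (hc i).2.1; omega, ?_⟩, hsum, hN⟩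
    rw [show D.Ibar k I (rr i) = I (rr i) from by simp [RootSystemData.Ibar, (hc i).2.1]]
    exact (hc i).2.2
  have hkey : ∀ N ∈ D.rVals (k + 1) (D.Ibar k I) α, ∃ N' ∈ D.rVals k I α, N' ≤ N := by
    rintro N ⟨m, a, rr, hc, hsum, hN⟩
    subst hN
    obtain ⟨N', hN', hle⟩ :=
      aux_key D k I h hk α hsupp (∑ i, gMeas k (rr i)) m a rr hc hsum le_rfl
    exact ⟨N', hN', hle⟩
  intro r
  constructor
  · rintro ⟨hmem, hlb⟩
    obtain ⟨N', hN', hle⟩ := hkey r hmem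
    have hge : r ≤ N' := hlb (hsub hN')
    have hEq : N' = r := le_antisymm hle hge
    subst hEq
    exact ⟨hN', fun N hN => hlb (hsub hN)⟩
  · rintro ⟨hmem, hlb⟩
    refine ⟨hsub hmem, fun N hN => ?_⟩
    obtain ⟨N', hN', hle⟩ := hkey N hN
    exact (hlb hN').trans hle
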